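/- arXiv:2404.17297 — 6 statements merged into one kernel-verified Lean document; each statement's English description precedes it below -/
import Mathlib

section
/- (Bekić's theorem) Let A₁ and A₂ be complete lattices and let f : A₁ × A₂ → A₁ and g : A₁ × A₂ → A₂ be monotone functions. Then the least fixed point of the map (x, y) ↦ (lfp (x₀ ↦ f(x₀, y)), lfp (y₀ ↦ g(x, y₀))) equals the least fixed point of the map (x, y) ↦ (f(x, y), g(x, y)). -/
/-- Knaster–Tarski least fixed point of a function on a complete lattice. -/
def klfp {α : Type*} [CompleteLattice α] (F : α → α) : α :=
  sInf {x | F x ≤ x}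

theorem klfp_le {α : Type*} [CompleteLattice α] {F : α → α} {x : α}
    (h : F x ≤ x) : klfp F ≤ x :=
  sInf_le h

theorem klfp_fixed {α : Type*} [CompleteLattice α] {F : α → α}
    (hF : Monotone F) : F (klfp F) = klfp F := by
  have h1 : F (klfp F) ≤ klfp F := by
    apply le_sInf
    intro x hx
    exact le_trans (hF (sInf_le hx)) hx
  exact le_antisymm h1 (klfp_le (hF h1))

/-- Bekić's theorem. -/
theorem bekic {A₁ A₂ : Type*} [CompleteLattice A₁] [CompleteLattice A₂]
    (f : A₁ × A₂ → A₁) (g : A₁ × A₂ → A₂)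
    (hf : Monotone f) (hg : Monotone g) :
    klfp (fun p : A₁ × A₂ =>
        (klfp (fun x₀ => f (x₀, p.2)), klfp (fun y₀ => g (p.1, y₀))))
      = klfp (fun p : A₁ × A₂ => (f p, g p)) := by
  set B : A₁ × A₂ → A₁ × A₂ := fun p =>
    (klfp (fun x₀ => f (x₀, p.2)), klfp (fun y₀ => g (p.1, y₀))) with hB
  set F : A₁ × A₂ → A₁ × A₂ := fun p => (f p, g p) with hFdef
  have hFmono : Monotone F := fun p q h => ⟨hf h, hg h⟩
  have hBmono : Monotone B := by
    intro p q h
    constructor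
    · apply le_sInf
      intro x hx
      exact sInf_le (le_trans (hf (Prod.mk_le_mk.mpr ⟨le_rfl, h.2⟩)) hx)
    · apply le_sInf
      intro y hy
      exact sInf_le (le_trans (hg (Prod.mk_le_mk.mpr ⟨h.1, le_rfl⟩)) hy)
  -- F's lfp is a prefixed point of B
  have hFfix : F (klfp F) = klfp F := klfp_fixed hFmono
  have h1 : klfp B ≤ klfp F := by
    apply klfp_le
    constructor
    · exact klfp_le (le_of_eq (congrArg Prod.fst hFfix))
    · exact klfp_le (le_of_eq (congrArg Prod.snd hFfix))
  have hBfix : B (klfp B) = klfp B := klfp_fixed hBmono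
  have h2 : klfp F ≤ klfp B := by
    apply klfp_le
    have ha : (klfp B).1 = klfp (fun x₀ => f (x₀, (klfp B).2)) :=
      (congrArg Prod.fst hBfix).symm
    have hb : (klfp B).2 = klfp (fun y₀ => g ((klfp B).1, y₀)) :=
      (congrArg Prod.snd hBfix).symm
    have hfa : f ((klfp B).1, (klfp B).2) = (klfp B).1 := by
      conv_lhs => rw [ha]
      rw [ha]
      exact klfp_fixed (fun x y h => hf (Prod.mk_le_mk.mpr ⟨h, le_rfl⟩))
    have hga : g ((klfp B).1, (klfp B).2) = (klfp B).2 := by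
      conv_lhs => rw [hb]
      rw [hb]
      exact klfp_fixed (fun x y h => hg (Prod.mk_le_mk.mpr ⟨le_rfl, h⟩))
    exact ⟨le_of_eq hfa, le_of_eq hga⟩
  exact le_antisymm h1 h2
end

section
/- While-loop refinement for abort-extended semantics: define γ_N(N, E) = N ∪ (E × state) for N ⊆ state × state, E ⊆ state, and γ_D(N, E) = N ∪ E for N, E ⊆ state. Suppose N_t ⊆ γ_N(N_s, E_s), D_t ⊆ γ_D(D_s, E_s), and E_t ⊆ E_s. Let tst be a subset of state and let test(tst) = {(σ,σ) | σ ∈ tst}. Then (test(tst) ∘ N_t)* ∘ test(ffs) ⊆ γ_N((test(tst) ∘ N_s)* ∘ test(ffs), (test(tst) ∘ N_s)* ∘ E_s') for appropriate E_s' = E_s, where * is reflexive transitive closure and ffs ⊆ state. -/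
/-- Composition of binary relations. -/
def relComp {σ : Type*} (R₁ R₂ : Set (σ × σ)) : Set (σ × σ) :=
  {p | ∃ σ₂, (p.1, σ₂) ∈ R₁ ∧ (σ₂, p.2) ∈ R₂}

/-- Action of a relation on a set. -/
def relApp {σ : Type*} (R : Set (σ × σ)) (X : Set σ) : Set σ :=
  {σ₁ | ∃ σ₂, (σ₁, σ₂) ∈ R ∧ σ₂ ∈ X}

/-- Reflexive transitive closure. -/
def relStar {σ : Type*} (X : Set (σ × σ)) : Set (σ × σ) :=
  {p | Relation.ReflTransGen (fun a b => (a, b) ∈ X) p.1 p.2}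

/-- Test relation: identity restricted to a set. -/
def test {σ : Type*} (X : Set σ) : Set (σ × σ) :=
  {p | p.1 ∈ X ∧ p.1 = p.2}

/-- Abort-lifting gamma for termination: `γ_N(N, E) = N ∪ (E × state)`. -/
def gammaN {σ : Type*} (N : Set (σ × σ)) (E : Set σ) : Set (σ × σ) :=
  N ∪ {p | p.1 ∈ E}

/-- While-loop refinement for abort-extended semantics. -/
theorem while_refines {state : Type*}
    (Nt Ns : Set (state × state)) (Dt Ds Et Es : Set state)
    (hN : Nt ⊆ gammaN Ns Es)
    (hD : Dt ⊆ Ds ∪ Es)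
    (hE : Et ⊆ Es)
    (tst ffs : Set state) :
    relComp (relStar (relComp (test tst) Nt)) (test ffs) ⊆
      gammaN (relComp (relStar (relComp (test tst) Ns)) (test ffs))
        (relApp (relStar (relComp (test tst) Ns)) Es) := by

  rintro ⟨a, b⟩ ⟨m, hstar, hm, heq⟩
  simp only at hstar hm heq
  subst heq
  -- key lemma by induction on the star
  have key : ∀ x : state, Relation.ReflTransGen (fun a b => (a,b) ∈ relComp (test tst) Nt) x m →
      ((x, m) ∈ relStar (relComp (test tst) Ns)) ∨ x ∈ relApp (relStar (relComp (test tst) Ns)) Es := by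
    intro x hx
    induction hx using Relation.ReflTransGen.head_induction_on with
    | refl => exact Or.inl Relation.ReflTransGen.refl
    | head hstep _ ih =>
      rename_i c d _
      obtain ⟨m2, ⟨hc, hceq⟩, hNt⟩ := hstep
      simp only at hceq
      subst hceq
      rcases hN hNt with hns | hes
      · have step : (c, d) ∈ relComp (test tst) Ns := ⟨c, ⟨hc, rfl⟩, hns⟩
        rcases ih with h | ⟨e, he, heEs⟩
        · exact Or.inl (Relation.ReflTransGen.head step h)
        · exact Or.inr ⟨e, Relation.ReflTransGen.head step he, heEs⟩
      · exact Or.inr ⟨c, Relation.ReflTransGen.refl, hes⟩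
  rcases key a hstar with h | h
  · exact Or.inl ⟨m, h, hm, rfl⟩
  · exact Or.inr h
end

section
/- Star-preservation of the simple abort-lifting gamma: for γ_N(N, E) = N ∪ (E × state) (relations) and γ_D(D, E) = D ∪ E (sets), we have (γ_N(N₁, E₁))* ∘ γ_D(D₂, E₂) ⊆ γ_D(N₁* ∘ D₂, N₁* ∘ (E₁ ∪ E₂)), where * is reflexive transitive closure of a relation and R ∘ X = {σ | ∃ σ', (σ,σ') ∈ R ∧ σ' ∈ X}. -/
/-- Abort-lifting gamma for sets: `γ_D(D, E) = D ∪ E`. -/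
def gammaD {σ : Type*} (D E : Set σ) : Set σ := D ∪ E

/-- Star-preservation of the simple abort-lifting gamma. -/
theorem gammaN_star {state : Type*}
    (N₁ : Set (state × state)) (D₂ E₁ E₂ : Set state) :
    relApp (relStar (gammaN N₁ E₁)) (gammaD D₂ E₂) ⊆
      gammaD (relApp (relStar N₁) D₂) (relApp (relStar N₁) (E₁ ∪ E₂)) := by
  rintro σ₁ ⟨σ₂, hstar, hmem⟩
  have key : ∀ a b : state, Relation.ReflTransGen (fun a b => (a, b) ∈ gammaN N₁ E₁) a b →
      Relation.ReflTransGen (fun a b => (a, b) ∈ N₁) a b ∨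
      ∃ c, Relation.ReflTransGen (fun a b => (a, b) ∈ N₁) a c ∧ c ∈ E₁ := by
    intro a b h
    induction h using Relation.ReflTransGen.head_induction_on with
    | refl => exact Or.inl .refl
    | head hab _ ih =>
      rcases hab with h1 | h1
      · rcases ih with ih | ⟨c, hc, hcE⟩
        · exact Or.inl (Relation.ReflTransGen.head h1 ih)
        · exact Or.inr ⟨c, Relation.ReflTransGen.head h1 hc, hcE⟩
      · exact Or.inr ⟨_, .refl, h1⟩
  rcases key _ _ hstar with h | ⟨c, hc, hcE⟩
  · rcases hmem with h2 | h2
    · exact Or.inl ⟨σ₂, h, h2⟩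
    · exact Or.inr ⟨σ₂, h, Or.inr h2⟩
  · exact Or.inr ⟨c, hc, Or.inl hcE⟩
end

section
/- Infinity-preservation of the simple abort-lifting gamma: define R^∞ = {σ₀ | ∃ infinite sequence σ₀, σ₁, σ₂, … with (σᵢ, σᵢ₊₁) ∈ R for all i}. For γ_N(N, E) = N ∪ (E × state) and γ_D(D, E) = D ∪ E, we have ((γ_N(N₁, E₁))* ∘ γ_D(D₂, E₂)) ∪ (γ_N(N₁, E₁))^∞ ⊆ γ_D((N₁* ∘ D₂) ∪ N₁^∞, N₁* ∘ (E₁ ∪ E₂)). -/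
/-- `R^∞`: states from which there exists an infinite `R`-chain. -/
def relInf {σ : Type*} (R : Set (σ × σ)) : Set σ :=
  {σ₀ | ∃ f : ℕ → σ, f 0 = σ₀ ∧ ∀ i, (f i, f (i + 1)) ∈ R}

/-- Infinity-preservation of the simple abort-lifting gamma. -/
theorem gammaN_inf {state : Type*}
    (N₁ : Set (state × state)) (D₂ E₁ E₂ : Set state) :
    relApp (relStar (gammaN N₁ E₁)) (gammaD D₂ E₂) ∪ relInf (gammaN N₁ E₁) ⊆
      gammaD (relApp (relStar N₁) D₂ ∪ relInf N₁)
        (relApp (relStar N₁) (E₁ ∪ E₂)) := by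
  have star_split : ∀ a b : state,
      Relation.ReflTransGen (fun x y => (x, y) ∈ gammaN N₁ E₁) a b →
      Relation.ReflTransGen (fun x y => (x, y) ∈ N₁) a b ∨
        ∃ c, Relation.ReflTransGen (fun x y => (x, y) ∈ N₁) a c ∧ c ∈ E₁ := by
    intro a b h
    induction h with
    | refl => exact Or.inl .refl
    | tail _ hstep ih =>
      rcases hstep with hN | hE
      · rcases ih with h | ⟨c, hc, hcE⟩
        · exact Or.inl (h.tail hN)
        · exact Or.inr ⟨c, hc, hcE⟩
      · rcases ih with h | ⟨c, hc, hcE⟩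
        · exact Or.inr ⟨_, h, hE⟩
        · exact Or.inr ⟨c, hc, hcE⟩
  rintro σ₀ (⟨σ', hstar, hD⟩ | ⟨f, hf0, hstep⟩)
  · rcases star_split _ _ hstar with h | ⟨c, hc, hcE⟩
    · rcases hD with hD | hE
      · exact Or.inl (Or.inl ⟨σ', h, hD⟩)
      · exact Or.inr ⟨σ', h, Or.inr hE⟩
    · exact Or.inr ⟨c, hc, Or.inl hcE⟩
  · by_cases hall : ∀ i, (f i, f (i + 1)) ∈ N₁
    · exact Or.inl (Or.inr ⟨f, hf0, hall⟩)
    · push_neg at hall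
      have hex : ∃ i, (f i, f (i + 1)) ∉ N₁ := hall
      classical
      let i := Nat.find hex
      have hi : (f i, f (i + 1)) ∉ N₁ := Nat.find_spec hex
      have hiE : f i ∈ E₁ := by
        rcases hstep i with h | h
        · exact absurd h hi
        · exact h
      have hreach : ∀ j, j ≤ i →
          Relation.ReflTransGen (fun x y => (x, y) ∈ N₁) (f 0) (f j) := by
        intro j
        induction j with
        | zero => intro _; exact .refl
        | succ k ih =>
          intro hk
          have hkN : (f k, f (k + 1)) ∈ N₁ := by
            by_contra hcon
            have hk' : k + 1 ≤ Nat.find hex := hk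
            exact Nat.find_min hex (by omega) hcon
          exact (ih (by omega)).tail hkN
      refine Or.inr ⟨f i, ?_, Or.inl hiE⟩
      rw [← hf0]
      exact hreach i le_rfl
end

section
/- Trace-refinement gamma is concatenation-preserved: let trace be finite event lists and let γ(N, E) = {(σ, τ, σ') | (σ, τ, σ') ∈ N ∨ ∃ τ₀, (σ, τ₀) ∈ E ∧ τ₀ is a prefix of τ} for N ⊆ state × trace × state and E ⊆ state × trace. Then γ(N₁, E₁) ∘ γ(N₂, E₂) ⊆ γ(N₁ ∘ N₂, E₁ ∪ (N₁ ∘ E₂)), where ∘ on ternary relations splits traces by concatenation and N ∘ E = {(σ, τ) | ∃ σ' τ₁ τ₂, (σ, τ₁, σ') ∈ N ∧ (σ', τ₂) ∈ E ∧ τ = τ₁ ++ τ₂}. -/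
/-- Trace-concatenating composition of ternary relations. -/
def tcomp {state event : Type*}
    (R₁ R₂ : Set (state × List event × state)) :
    Set (state × List event × state) :=
  {p | ∃ σ₂ τ₁ τ₂, (p.1, τ₁, σ₂) ∈ R₁ ∧ (σ₂, τ₂, p.2.2) ∈ R₂ ∧
    p.2.1 = τ₁ ++ τ₂}

/-- Composition of a ternary relation with an erroring set:
`N ∘ E = {(σ, τ) | ∃ σ' τ₁ τ₂, (σ,τ₁,σ') ∈ N ∧ (σ',τ₂) ∈ E ∧ τ = τ₁ ++ τ₂}`. -/
def tcompE {state event : Type*}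
    (N : Set (state × List event × state)) (E : Set (state × List event)) :
    Set (state × List event) :=
  {p | ∃ σ' τ₁ τ₂, (p.1, τ₁, σ') ∈ N ∧ (σ', τ₂) ∈ E ∧ p.2 = τ₁ ++ τ₂}

/-- Trace-refinement gamma (termination instance 2). -/
def gammaT {state event : Type*}
    (N : Set (state × List event × state)) (E : Set (state × List event)) :
    Set (state × List event × state) :=
  {p | p ∈ N ∨ ∃ τ₀, (p.1, τ₀) ∈ E ∧ ∃ τ₁, p.2.1 = τ₀ ++ τ₁}

/-- Trace-refinement gamma is concatenation-preserved. -/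
theorem gammaT_comp {state event : Type*}
    (N₁ N₂ : Set (state × List event × state))
    (E₁ E₂ : Set (state × List event)) :
    tcomp (gammaT N₁ E₁) (gammaT N₂ E₂) ⊆
      gammaT (tcomp N₁ N₂) (E₁ ∪ tcompE N₁ E₂) := by
  rintro ⟨σ, τ, σ'⟩ ⟨σ₂, τ₁, τ₂, h₁, h₂, hτ⟩
  rcases h₁ with h₁ | ⟨τ₀, hE, τr, hpre⟩
  · rcases h₂ with h₂ | ⟨τ₀, hE, τr, hpre⟩
    · exact Or.inl ⟨σ₂, τ₁, τ₂, h₁, h₂, hτ⟩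
    · refine Or.inr ⟨τ₁ ++ τ₀, Or.inr ⟨σ₂, τ₁, τ₀, h₁, hE, rfl⟩, τr, ?_⟩
      simp_all
  · refine Or.inr ⟨τ₀, Or.inl hE, τr ++ τ₂, ?_⟩
    simp_all
end

section
/- The Kripke-relation gamma is concatenation-preserved when ⤳ is transitive: with γ_N as in the previous statement and ⤳ a preorder on W, and with trace-splitting composition on ternary relations, γ_N(N₁, E₁) ∘ γ_N(N₂, E₂) ⊆ γ_N(N₁ ∘ N₂, E₁ ∪ (N₁ ∘ E₂)), where N ∘ E = {(σ, τ) | ∃ σ' τ₁ τ₂, (σ, τ₁, σ') ∈ N ∧ (σ', τ₂) ∈ E ∧ τ = τ₁ ++ τ₂}. -/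
/-- Kripke-relation gamma for CompCert statement refinement. -/
def gammaK {W state_s state_t event : Type*}
    (R : W → Set (state_s × state_t)) (acc : W → W → Prop)
    (N : Set (state_s × List event × state_s))
    (E : Set (state_s × List event)) :
    Set (state_t × List event × state_t) :=
  {p | ∀ σs w, (σs, p.1) ∈ R w →
    (∃ w' σs', (σs, p.2.1, σs') ∈ N ∧ acc w w' ∧ (σs', p.2.2) ∈ R w') ∨
    (∃ τ₀, (σs, τ₀) ∈ E ∧ ∃ τ₁, p.2.1 = τ₀ ++ τ₁)}

/-- The Kripke-relation gamma is concatenation-preserved when the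
accessibility relation is a preorder. -/
theorem gammaK_comp {W state_s state_t event : Type*}
    (R : W → Set (state_s × state_t)) (acc : W → W → Prop)
    (hrefl : ∀ w, acc w w)
    (htrans : ∀ w₁ w₂ w₃, acc w₁ w₂ → acc w₂ w₃ → acc w₁ w₃)
    (N₁ N₂ : Set (state_s × List event × state_s))
    (E₁ E₂ : Set (state_s × List event)) :
    tcomp (gammaK (state_t := state_t) R acc N₁ E₁)
        (gammaK (state_t := state_t) R acc N₂ E₂) ⊆
      gammaK (state_t := state_t) R acc (tcomp N₁ N₂)
        (E₁ ∪ tcompE N₁ E₂) := by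
  rintro ⟨σt, τ, σt'⟩ ⟨σm, τ₁, τ₂, h1, h2, hτ⟩
  intro σs w hR
  rcases h1 σs w hR with ⟨w', σs', hN1, hacc1, hR'⟩ | ⟨τ₀, hE, τr, heq⟩
  · rcases h2 σs' w' hR' with ⟨w'', σs'', hN2, hacc2, hR''⟩ | ⟨τ₀, hE, τr, heq⟩
    · exact Or.inl ⟨w'', σs'', ⟨σs', τ₁, τ₂, hN1, hN2, hτ⟩,
        htrans _ _ _ hacc1 hacc2, hR''⟩
    · exact Or.inr ⟨τ₁ ++ τ₀, Or.inr ⟨σs', τ₁, τ₀, hN1, hE, rfl⟩,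
        τr, by simp at hτ heq; simp [hτ, heq]⟩
  · exact Or.inr ⟨τ₀, Or.inl hE, τr ++ τ₂, by simp at hτ heq; simp [hτ, heq]⟩
end
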